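/- Let G be a finite group, g ∈ G, and suppose g^x = g^l for some x ∈ G and integer l with gcd(l, |g|) = 1. Let 𝒩 be a subnormal series from ⟨g⟩ to G and t, k positive integers with l^t ≡ 1 (mod |g|) and gcd(k,|g|)=1. Then c_𝒩(u_l,t(g^k))^i = c_𝒩(u_{l^i},t(g^k)) for every positive integer i, and in particular c_𝒩(u_l,t(g^k)) has finite order (its t-th power is 1). -/

import Mathlib

/-- Conjugation `a^h = h⁻¹ a h` of group-ring elements by group elements. -/
noncomputable def conjBy {G : Type*} [Group G] (h : G) (a : MonoidAlgebra ℤ G) :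
    MonoidAlgebra ℤ G :=
  MonoidAlgebra.of ℤ G h⁻¹ * a * MonoidAlgebra.of ℤ G h

/-- A subnormal series `⟨g⟩ = N₀ ⊴ N₁ ⊴ ⋯ ⊴ N_len = G`. -/
structure SubnormalSeries (G : Type*) [Group G] (g : G) where
  len : ℕ
  N : ℕ → Subgroup G
  bot_eq : N 0 = Subgroup.zpowers g
  top_eq : N len = ⊤
  le_succ : ∀ i, N i ≤ N (i + 1)
  conj_mem : ∀ i, ∀ x ∈ N (i + 1), ∀ y ∈ N i, x⁻¹ * y * x ∈ N i

/-- A choice, for each `i`, of a (right) transversal `T i` of `N i` in `N (i+1)`,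
recorded as a duplicate-free list. -/
structure TransversalSystem {G : Type*} [Group G] {g : G}
    (S : SubnormalSeries G g) where
  T : ℕ → List G
  nodup : ∀ i, (T i).Nodup
  mem : ∀ i, ∀ t ∈ T i, t ∈ S.N (i + 1)
  rep : ∀ i, ∀ y ∈ S.N (i + 1), ∃! t, t ∈ T i ∧ y * t⁻¹ ∈ S.N i

/-- The construction `c⁰(u) = u`, `cⁱ(u) = ∏_{h ∈ T i} (cⁱ⁻¹(u))^h`. -/
noncomputable def cSeq {G : Type*} [Group G] {g : G} (S : SubnormalSeries G g)
    (TS : TransversalSystem S) (u : MonoidAlgebra ℤ G) : ℕ → MonoidAlgebra ℤ G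
  | 0 => u
  | i + 1 => ((TS.T i).map fun h => conjBy h (cSeq S TS u i)).prod

/-- The Bass unit `u_{k,m}(g)` in the integral group ring `ℤG`, with `n = |g|`. -/
noncomputable def bassElem {G : Type*} [Group G] (g : G) (k m : ℕ) :
    MonoidAlgebra ℤ G :=
  (∑ i ∈ Finset.range k, MonoidAlgebra.of ℤ G (g ^ i)) ^ m +
    ((1 - (k : ℤ) ^ m) / (orderOf g : ℤ)) •
      ∑ i ∈ Finset.range (orderOf g), MonoidAlgebra.of ℤ G (g ^ i)

namespace CB

variable {G : Type*} [Group G]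

local notation "R" => MonoidAlgebra ℤ G
local notation "σ" => MonoidAlgebra.of ℤ G

lemma of_mul_of (a b : G) : (σ a) * (σ b) = σ (a*b) := by
  simp [MonoidAlgebra.of_apply, MonoidAlgebra.single_mul_single]

lemma single_one : MonoidAlgebra.single (1:G) (1:ℤ) = 1 := (MonoidAlgebra.one_def).symm

lemma of_one : (σ (1:G)) = 1 := by
  rw [MonoidAlgebra.of_apply, ← MonoidAlgebra.one_def]

lemma of_inv_cancel (y : G) : (σ y) * (σ y⁻¹) = 1 := by rw [of_mul_of]; simp [of_one, single_one]

lemma of_inv_cancel' (y : G) : (σ y⁻¹) * (σ y) = 1 := by rw [of_mul_of]; simp [of_one, single_one]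

lemma conjBy_mul (h : G) (a b : R) : conjBy h (a*b) = conjBy h a * conjBy h b := by
  unfold conjBy
  calc σ h⁻¹ * (a * b) * σ h
      = σ h⁻¹ * (a * (((σ h) * (σ h⁻¹)) * (b * σ h))) := by
        rw [of_inv_cancel]; simp only [mul_assoc, one_mul]
    _ = _ := by simp only [mul_assoc]

lemma conjBy_one (h : G) : conjBy h (1 : R) = 1 := by
  unfold conjBy; rw [mul_one, of_mul_of]; simp [of_one, single_one]

lemma conjBy_comp (k h : G) (a : R) : conjBy k (conjBy h a) = conjBy (h*k) a := by
  unfold conjBy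
  rw [mul_inv_rev, ← of_mul_of k⁻¹ h⁻¹, ← of_mul_of h k]
  simp only [mul_assoc]

lemma conjBy_id (a : R) : conjBy 1 a = a := by
  unfold conjBy; simp [of_one, single_one]

lemma conjBy_of (h y : G) : conjBy h (σ y) = σ (h⁻¹*y*h) := by
  unfold conjBy; rw [of_mul_of, of_mul_of]

lemma conjBy_pow (h : G) (a : R) (n : ℕ) : conjBy h (a^n) = (conjBy h a)^n := by
  induction n with
  | zero => simpa using conjBy_one h
  | succ n ih => rw [pow_succ, conjBy_mul, ih, pow_succ]

lemma conjBy_add (h : G) (a b : R) : conjBy h (a+b) = conjBy h a + conjBy h b := by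
  unfold conjBy; rw [mul_add, add_mul]

lemma conjBy_smul (h : G) (z : ℤ) (a : R) : conjBy h (z • a) = z • conjBy h a := by
  unfold conjBy
  rw [mul_smul_comm, smul_mul_assoc]

lemma conjBy_sum (h : G) {ι : Type*} (s : Finset ι) (f : ι → R) :
    conjBy h (∑ i ∈ s, f i) = ∑ i ∈ s, conjBy h (f i) := by
  classical
  induction s using Finset.induction with
  | empty => unfold conjBy; simp
  | insert _ _ hx ih => rw [Finset.sum_insert hx, conjBy_add, ih, Finset.sum_insert hx]

lemma conjBy_listProd (h : G) (l : List R) :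
    conjBy h l.prod = (l.map (conjBy h)).prod := by
  induction l with
  | nil => simpa using conjBy_one h
  | cons a l ih => rw [List.prod_cons, conjBy_mul, ih, List.map_cons, List.prod_cons]

lemma conjBy_cancel (h : G) (a : R) : conjBy h⁻¹ (conjBy h a) = a := by
  rw [conjBy_comp]; simp [conjBy_id]

/-- The ℤ-span of a subgroup inside the group algebra (our notion of "supported in K"). -/
noncomputable def sg (K : Subgroup G) : Submodule ℤ (MonoidAlgebra ℤ G) :=
  Submodule.span ℤ (⇑(MonoidAlgebra.of ℤ G) '' (K : Set G))

lemma of_mem_sg {K : Subgroup G} {y : G} (hy : y ∈ K) : (σ y) ∈ sg K :=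
  Submodule.subset_span ⟨y, hy, rfl⟩

lemma one_mem_sg (K : Subgroup G) : (1 : R) ∈ sg K := by
  have : (1 : R) = σ 1 := by simp [MonoidAlgebra.of_apply]; rfl
  rw [this]; exact of_mem_sg K.one_mem

lemma sg_mono {K K' : Subgroup G} (h : K ≤ K') : sg K ≤ sg K' := by
  apply Submodule.span_mono
  exact Set.image_mono h

lemma mul_mem_sg {K : Subgroup G} {a b : R} (ha : a ∈ sg K) (hb : b ∈ sg K) :
    a * b ∈ sg K := by
  induction ha using Submodule.span_induction with
  | mem x hx =>
    obtain ⟨y, hy, rfl⟩ := hx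
    induction hb using Submodule.span_induction with
    | mem z hz =>
      obtain ⟨w, hw, rfl⟩ := hz
      rw [of_mul_of]; exact of_mem_sg (K.mul_mem hy hw)
    | zero => rw [mul_zero]; exact (sg K).zero_mem
    | add p q _ _ hp hq => rw [mul_add]; exact (sg K).add_mem hp hq
    | smul z p _ hp => rw [mul_smul_comm]; exact (sg K).smul_mem z hp
  | zero => rw [zero_mul]; exact (sg K).zero_mem
  | add p q _ _ hp hq => rw [add_mul]; exact (sg K).add_mem hp hq
  | smul z p _ hp => rw [smul_mul_assoc]; exact (sg K).smul_mem z hp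

lemma pow_mem_sg {K : Subgroup G} {a : R} (ha : a ∈ sg K) (n : ℕ) : a^n ∈ sg K := by
  induction n with
  | zero => simpa using one_mem_sg K
  | succ n ih => rw [pow_succ]; exact mul_mem_sg ih ha

lemma conjBy_mem_sg {K K' : Subgroup G} {h : G} (hmap : ∀ y ∈ K, h⁻¹ * y * h ∈ K')
    {a : R} (ha : a ∈ sg K) : conjBy h a ∈ sg K' := by
  induction ha using Submodule.span_induction with
  | mem x hx =>
    obtain ⟨y, hy, rfl⟩ := hx
    rw [conjBy_of]; exact of_mem_sg (hmap y hy)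
  | zero =>
    have : conjBy h (0 : R) = 0 := by unfold conjBy; simp
    rw [this]; exact (sg K').zero_mem
  | add p q _ _ hp hq => rw [conjBy_add]; exact (sg K').add_mem hp hq
  | smul z p _ hp => rw [conjBy_smul]; exact (sg K').smul_mem z hp

lemma listProd_mem_sg {K : Subgroup G} {l : List R} (h : ∀ a ∈ l, a ∈ sg K) :
    l.prod ∈ sg K := by
  induction l with
  | nil => simpa using one_mem_sg K
  | cons a l ih =>
    rw [List.prod_cons]
    exact mul_mem_sg (h a (by simp)) (ih fun b hb => h b (by simp [hb]))

/-- a commutes with anything supported in K if it is conj-invariant under K. -/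
lemma comm_of_inv {K : Subgroup G} {a b : R} (hb : b ∈ sg K)
    (ha : ∀ y ∈ K, conjBy y a = a) : a * b = b * a := by
  induction hb using Submodule.span_induction with
  | mem x hx =>
    obtain ⟨y, hy, rfl⟩ := hx
    have h1 := ha y hy
    unfold conjBy at h1
    calc a * σ y = ((σ y) * (σ y⁻¹)) * a * (σ y) := by rw [of_inv_cancel]; simp
      _ = (σ y) * ((σ y⁻¹) * a * (σ y)) := by simp only [mul_assoc]
      _ = (σ y) * a := by rw [h1]
  | zero => simp
  | add p q _ _ hp hq => rw [mul_add, add_mul, hp, hq]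
  | smul z p _ hp => rw [mul_smul_comm, smul_mul_assoc, hp]

/-- "K-central": supported in K and conjugation-invariant under K. -/
def IsCtr (K : Subgroup G) (a : R) : Prop :=
  a ∈ sg K ∧ ∀ y ∈ K, conjBy y a = a

lemma IsCtr.commute {K : Subgroup G} {a b : R} (ha : IsCtr K a) (hb : IsCtr K b) :
    Commute a b :=
  comm_of_inv hb.1 ha.2

lemma IsCtr.one (K : Subgroup G) : IsCtr K (1 : R) :=
  ⟨one_mem_sg K, fun y _ => conjBy_one y⟩

lemma IsCtr.mul {K : Subgroup G} {a b : R} (ha : IsCtr K a) (hb : IsCtr K b) :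
    IsCtr K (a*b) :=
  ⟨mul_mem_sg ha.1 hb.1, fun y hy => by rw [conjBy_mul, ha.2 y hy, hb.2 y hy]⟩

/-- conjugating a K-central element by a normalizing element gives a K-central element. -/
lemma IsCtr.conj {K : Subgroup G} {a : R} (ha : IsCtr K a) {h : G}
    (h1 : ∀ y ∈ K, h⁻¹ * y * h ∈ K) (h2 : ∀ y ∈ K, h * y * h⁻¹ ∈ K) :
    IsCtr K (conjBy h a) := by
  constructor
  · exact conjBy_mem_sg h1 ha.1
  · intro y hy
    rw [conjBy_comp, show h * y = (h*y*h⁻¹) * h by group, ← conjBy_comp,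
      ha.2 _ (h2 y hy)]

end CB

namespace CB

variable {G : Type*} [Group G]

local notation "R" => MonoidAlgebra ℤ G
local notation "σ" => MonoidAlgebra.of ℤ G

/-- `L` is a duplicate-free right transversal of `H` in `K`. -/
def IsTrans (H K : Subgroup G) (L : List G) : Prop :=
  L.Nodup ∧ (∀ t ∈ L, t ∈ K) ∧ ∀ y ∈ K, ∃! t, t ∈ L ∧ y * t⁻¹ ∈ H

lemma exists_isTrans (H K : Subgroup G) [Fintype G] : ∃ L, IsTrans H K L := by
  classical
  letI s : Setoid G := QuotientGroup.rightRel H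
  let π : G → Quotient s := fun y => Quotient.mk s y
  have hrel : ∀ a b : G, (Quotient.mk s a = Quotient.mk s b) ↔ b * a⁻¹ ∈ H := by
    intro a b
    rw [Quotient.eq]
    exact QuotientGroup.rightRel_apply
  let KF : Finset G := Set.toFinset (K : Set G)
  let F : Finset (Quotient s) := KF.image π
  have hex : ∀ c ∈ F, ∃ y, (y ∈ K ∧ π y = c) := by
    intro c hc
    obtain ⟨y, hy, rfl⟩ := Finset.mem_image.mp hc
    exact ⟨y, by simpa [KF, Set.mem_toFinset] using hy, rfl⟩
  choose rep hrep1 hrep2 using hex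
  refine ⟨F.attach.toList.map (fun c => rep c.1 c.2), ?_, ?_, ?_⟩
  · refine List.Nodup.map_on ?_ (Finset.nodup_toList _)
    intro a ha b hb hab
    have : a.1 = b.1 := by
      rw [← hrep2 a.1 a.2, ← hrep2 b.1 b.2, hab]
    exact Subtype.ext this
  · intro t ht
    obtain ⟨c, _, rfl⟩ := List.mem_map.mp ht
    exact hrep1 c.1 c.2
  · intro y hy
    have hyF : π y ∈ F := Finset.mem_image.mpr ⟨y, by simpa [KF, Set.mem_toFinset], rfl⟩
    refine ⟨rep (π y) hyF, ⟨List.mem_map.mpr ⟨⟨π y, hyF⟩, by simp, rfl⟩, ?_⟩, ?_⟩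
    · rw [← hrel]
      exact hrep2 (π y) hyF
    · rintro t' ⟨ht'L, ht'H⟩
      obtain ⟨⟨c, hcF⟩, -, rfl⟩ := List.mem_map.mp ht'L
      have : π (rep c hcF) = π y := (hrel _ _).mpr ht'H
      have hc : c = π y := by rw [← hrep2 c hcF, this]
      subst hc
      rfl

/-- conjugating an `H`-central element by an element of a group `K` normalizing `H`. -/
lemma conj_isCtr_of_mem {H K : Subgroup G} (hn : ∀ x ∈ K, ∀ y ∈ H, x⁻¹ * y * x ∈ H)
    {q : G} (hq : q ∈ K) {w : MonoidAlgebra ℤ G} (hw : IsCtr H w) :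
    IsCtr H (conjBy q w) := by
  refine hw.conj (fun y hy => hn q hq y hy) (fun y hy => ?_)
  have := hn q⁻¹ (K.inv_mem hq) y hy
  simpa using this

/-- factors `conjBy q w` over any two transversals of a normal `H ⊴ K` multiply to
the same element, provided `w` is `H`-central. -/
lemma trans_prod_eq (H K : Subgroup G) (hn : ∀ x ∈ K, ∀ y ∈ H, x⁻¹ * y * x ∈ H)
    {w : MonoidAlgebra ℤ G} (hw : IsCtr H w) {L₁ L₂ : List G}
    (h₁ : IsTrans H K L₁) (h₂ : IsTrans H K L₂) :
    (L₁.map fun q => conjBy q w).prod = (L₂.map fun q => conjBy q w).prod := by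
  classical
  letI s : Setoid G := QuotientGroup.rightRel H
  set f : G → MonoidAlgebra ℤ G := fun q => conjBy q w with hf
  have hconst : ∀ a b : G, a ≈ b → f a = f b := by
    intro a b hab
    have hmem : b * a⁻¹ ∈ H := QuotientGroup.rightRel_apply.mp hab
    simp only [hf]
    calc conjBy a w = conjBy a (conjBy (b*a⁻¹) w) := by rw [hw.2 _ hmem]
      _ = conjBy (b * a⁻¹ * a) w := by rw [conjBy_comp]
      _ = conjBy b w := by group
  let fbar : Quotient s → MonoidAlgebra ℤ G := Quotient.lift f hconst
  let π : G → Quotient s := fun y => Quotient.mk s y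
  have hrel : ∀ a b : G, (π a = π b) ↔ b * a⁻¹ ∈ H := by
    intro a b; rw [Quotient.eq]; exact QuotientGroup.rightRel_apply
  have key : ∀ L : List G, IsTrans H K L → (L.map π).Nodup ∧
      (∀ c, c ∈ (L.map π).toFinset ↔ ∃ y ∈ K, π y = c) := by
    intro L hL
    constructor
    · refine List.Nodup.map_on ?_ hL.1
      intro a ha b hb hab
      -- a b in same coset; uniqueness at y := a
      have hmem : a * b⁻¹ ∈ H := (hrel b a).mp hab.symm
      obtain ⟨t, _, huniq⟩ := hL.2.2 a (hL.2.1 a ha)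
      have h1 : a = t := huniq a ⟨ha, by simpa using H.one_mem⟩
      have h2 : b = t := huniq b ⟨hb, hmem⟩
      rw [h1, h2]
    · intro c
      simp only [List.mem_toFinset, List.mem_map]
      constructor
      · rintro ⟨t, htL, rfl⟩
        exact ⟨t, hL.2.1 t htL, rfl⟩
      · rintro ⟨y, hy, rfl⟩
        obtain ⟨t, ⟨htL, htH⟩, -⟩ := hL.2.2 y hy
        exact ⟨t, htL, (hrel t y).mpr htH⟩
  have hperm : (L₁.map π).Perm (L₂.map π) :=
    List.perm_of_nodup_nodup_toFinset_eq (key L₁ h₁).1 (key L₂ h₂).1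
      (by ext c; rw [(key L₁ h₁).2 c, (key L₂ h₂).2 c])
  have hmapf : ∀ L : List G, (L.map π).map fbar = L.map f := by
    intro L; rw [List.map_map]; rfl
  have hperm2 : (L₁.map f).Perm (L₂.map f) := by
    rw [← hmapf L₁, ← hmapf L₂]
    exact hperm.map fbar
  refine hperm2.prod_eq' ?_
  refine List.pairwise_of_forall_mem_list ?_
  rintro a ha b hb
  obtain ⟨q, hq, rfl⟩ := List.mem_map.mp ha
  obtain ⟨q', hq', rfl⟩ := List.mem_map.mp hb
  exact (conj_isCtr_of_mem hn (h₁.2.1 q hq) hw).commute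
    (conj_isCtr_of_mem hn (h₁.2.1 q' hq') hw)

/-- transversal shifted on the right by an element of `K`. -/
lemma IsTrans.mul_right {H K : Subgroup G} {L : List G} (hL : IsTrans H K L)
    {y : G} (hy : y ∈ K) : IsTrans H K (L.map (· * y)) := by
  refine ⟨hL.1.map (fun a b => by simp), ?_, ?_⟩
  · intro t ht
    obtain ⟨a, ha, rfl⟩ := List.mem_map.mp ht
    exact K.mul_mem (hL.2.1 a ha) hy
  · intro z hz
    obtain ⟨t, ⟨htL, htH⟩, huniq⟩ := hL.2.2 (z * y⁻¹) (K.mul_mem hz (K.inv_mem hy))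
    refine ⟨t * y, ⟨List.mem_map.mpr ⟨t, htL, rfl⟩, by
      simpa [mul_assoc] using htH⟩, ?_⟩
    rintro t' ⟨ht'L, ht'H⟩
    obtain ⟨a, haL, rfl⟩ := List.mem_map.mp ht'L
    have : a = t := huniq a ⟨haL, by simpa [mul_assoc] using ht'H⟩
    rw [this]

/-- transversal shifted on the left by an element of `K` (needs `H ⊴ K`). -/
lemma IsTrans.mul_left {H K : Subgroup G} {L : List G} (hL : IsTrans H K L)
    (hn : ∀ x ∈ K, ∀ y ∈ H, x⁻¹ * y * x ∈ H)
    {x : G} (hx : x ∈ K) : IsTrans H K (L.map (x * ·)) := by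
  have hconj : ∀ z t : G, z * t⁻¹ * x⁻¹ ∈ H ↔ x⁻¹ * (z * t⁻¹) ∈ H := by
    intro z t
    constructor
    · intro h
      have := hn x hx _ h
      simpa [mul_assoc] using this
    · intro h
      have := hn x⁻¹ (K.inv_mem hx) _ h
      simpa [mul_assoc] using this
  refine ⟨hL.1.map (fun a b => by simp), ?_, ?_⟩
  · intro t ht
    obtain ⟨a, ha, rfl⟩ := List.mem_map.mp ht
    exact K.mul_mem hx (hL.2.1 a ha)
  · intro z hz
    obtain ⟨t, ⟨htL, htH⟩, huniq⟩ := hL.2.2 (x⁻¹ * z) (K.mul_mem (K.inv_mem hx) hz)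
    refine ⟨x * t, ⟨List.mem_map.mpr ⟨t, htL, rfl⟩, ?_⟩, ?_⟩
    · have : z * t⁻¹ * x⁻¹ ∈ H := by
        rw [hconj]
        simpa [mul_assoc] using htH
      simpa [mul_assoc, mul_inv_rev] using this
    · rintro t' ⟨ht'L, ht'H⟩
      obtain ⟨a, haL, rfl⟩ := List.mem_map.mp ht'L
      have h1 : z * a⁻¹ * x⁻¹ ∈ H := by
        simpa [mul_assoc, mul_inv_rev] using ht'H
      have h2 : x⁻¹ * z * a⁻¹ ∈ H := by
        have := (hconj z a).mp h1
        simpa [mul_assoc] using this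
      have : a = t := huniq a ⟨haL, h2⟩
      rw [this]

/-- A subnormal chain with transversals, with no endpoint constraints. -/
structure Chain (G : Type*) [Group G] where
  N : ℕ → Subgroup G
  T : ℕ → List G
  mono : ∀ i, N i ≤ N (i+1)
  conj : ∀ i, ∀ x ∈ N (i+1), ∀ y ∈ N i, x⁻¹ * y * x ∈ N i
  trans : ∀ i, IsTrans (N i) (N (i+1)) (T i)

noncomputable def cv (C : Chain G) (u : MonoidAlgebra ℤ G) : ℕ → MonoidAlgebra ℤ G
  | 0 => u
  | i + 1 => ((C.T i).map fun h => conjBy h (cv C u i)).prod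

variable {C : Chain G}

lemma cv_ctr {u : MonoidAlgebra ℤ G} (hu : IsCtr (C.N 0) u) (i : ℕ) :
    IsCtr (C.N i) (cv C u i) := by
  induction i with
  | zero => exact hu
  | succ i ih =>
    constructor
    · show (((C.T i).map fun h => conjBy h (cv C u i)).prod) ∈ sg (C.N (i+1))
      refine listProd_mem_sg ?_
      intro a ha
      obtain ⟨h, hh, rfl⟩ := List.mem_map.mp ha
      exact sg_mono (C.mono i) (conjBy_mem_sg (fun y hy => C.conj i h ((C.trans i).2.1 h hh) y hy) ih.1)
    · intro y hy
      show conjBy y (((C.T i).map fun h => conjBy h (cv C u i)).prod) = _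
      rw [conjBy_listProd, List.map_map]
      have e1 : ((conjBy y) ∘ fun h => conjBy h (cv C u i)) = fun h => conjBy (h * y) (cv C u i) := by
        funext h
        simp [Function.comp, conjBy_comp]
      rw [e1]
      have e2 : ((C.T i).map fun h => conjBy (h * y) (cv C u i))
          = (((C.T i).map (· * y)).map fun q => conjBy q (cv C u i)) := by
        rw [List.map_map]; rfl
      rw [e2]
      exact trans_prod_eq (C.N i) (C.N (i+1)) (C.conj i) ih ((C.trans i).mul_right hy) (C.trans i)

lemma cv_one (i : ℕ) : cv C (1 : MonoidAlgebra ℤ G) i = 1 := by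
  induction i with
  | zero => rfl
  | succ i ih =>
    show (((C.T i).map fun h => conjBy h (cv C 1 i)).prod) = 1
    rw [ih]
    have : ((C.T i).map fun h => conjBy h (1 : MonoidAlgebra ℤ G)) = (C.T i).map fun _ => 1 := by
      simp [conjBy_one]
    rw [this, List.map_const']
    simp

lemma prod_map_mul_split (L : List G) (f g : G → MonoidAlgebra ℤ G)
    (hc : ∀ a ∈ L, ∀ b ∈ L, Commute (g a) (f b)) :
    (L.map fun h => f h * g h).prod = (L.map f).prod * (L.map g).prod := by
  induction L with
  | nil => simp
  | cons a L ih =>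
    simp only [List.map_cons, List.prod_cons]
    rw [ih (fun p hp q hq => hc p (by simp [hp]) q (by simp [hq]))]
    have hcom : Commute (g a) ((L.map f).prod) := by
      refine Commute.list_prod_right _ _ ?_
      intro x hx
      obtain ⟨b, hb, rfl⟩ := List.mem_map.mp hx
      exact hc a (by simp) b (by simp [hb])
    calc f a * g a * ((L.map f).prod * (L.map g).prod)
        = f a * (g a * (L.map f).prod) * (L.map g).prod := by simp only [mul_assoc]
      _ = f a * ((L.map f).prod * g a) * (L.map g).prod := by rw [hcom.eq]
      _ = _ := by simp only [mul_assoc]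

lemma cv_mul {u v : MonoidAlgebra ℤ G} (hu : IsCtr (C.N 0) u) (hv : IsCtr (C.N 0) v)
    (i : ℕ) : cv C (u * v) i = cv C u i * cv C v i := by
  induction i with
  | zero => rfl
  | succ i ih =>
    show (((C.T i).map fun h => conjBy h (cv C (u*v) i)).prod) = _
    have e1 : ((C.T i).map fun h => conjBy h (cv C (u*v) i))
        = (C.T i).map fun h => conjBy h (cv C u i) * conjBy h (cv C v i) := by
      apply List.map_congr_left
      intro h _
      rw [ih, conjBy_mul]
    rw [e1, prod_map_mul_split]
    · rfl
    · intro a ha b hb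
      exact (conj_isCtr_of_mem (C.conj i) ((C.trans i).2.1 a ha) (cv_ctr hv i)).commute
        (conj_isCtr_of_mem (C.conj i) ((C.trans i).2.1 b hb) (cv_ctr hu i))

/-- if two consecutive subgroups agree, the step does nothing. -/
lemma cv_drop {u : MonoidAlgebra ℤ G} (hu : IsCtr (C.N 0) u) (r : ℕ)
    (h : C.N r = C.N (r+1)) : cv C u (r+1) = cv C u r := by
  -- the transversal is a singleton [t₀] with t₀ ∈ N r
  obtain ⟨t₀, ⟨ht₀L, ht₀H⟩, huniq⟩ := (C.trans r).2.2 1 (C.N (r+1)).one_mem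
  have hall : ∀ t ∈ C.T r, t = t₀ := by
    intro t ht
    obtain ⟨t', ⟨ht'L, ht'H⟩, huniq'⟩ := (C.trans r).2.2 t ((C.trans r).2.1 t ht)
    have h1 : t = t' := huniq' t ⟨ht, by simpa using (C.N r).one_mem⟩
    have h2 : t₀ = t' := by
      refine huniq' t₀ ⟨ht₀L, ?_⟩
      rw [h]
      exact (C.N (r+1)).mul_mem ((C.trans r).2.1 t ht) ((C.N (r+1)).inv_mem ((C.trans r).2.1 t₀ ht₀L))
    rw [h1, h2]
  have hsing : C.T r = [t₀] := by
    have hmem := ht₀L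
    rcases hL : C.T r with _ | ⟨a, L'⟩
    · rw [hL] at hmem; simp at hmem
    · have ha : a = t₀ := hall a (by rw [hL]; simp)
      rcases hL' : L' with _ | ⟨b, L''⟩
      · rw [ha]
      · exfalso
        have hb : b = t₀ := hall b (by rw [hL, hL']; simp)
        have hnd := (C.trans r).1
        rw [hL, hL', ha, hb] at hnd
        simp at hnd
  show (((C.T r).map fun h => conjBy h (cv C u r)).prod) = _
  rw [hsing]
  simp only [List.map_cons, List.map_nil, List.prod_cons, List.prod_nil, mul_one]
  have ht₀r : t₀ ∈ C.N r := by
    rw [h]; exact (C.trans r).2.1 t₀ ht₀L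
  exact (cv_ctr hu r).2 t₀ ht₀r

/-- The chain conjugated by `x` : subgroups `x⁻¹ (N i) x`, transversals `x⁻¹ (T i) x`. -/
noncomputable def Chain.conjC (C : Chain G) (x : G) : Chain G where
  N i := (C.N i).comap (MulAut.conj x).toMonoidHom
  T i := (C.T i).map fun t => x⁻¹ * t * x
  mono i := fun z hz => by
    simp only [Subgroup.mem_comap] at hz ⊢
    exact C.mono i hz
  conj i := by
    intro a ha y hy
    simp only [Subgroup.mem_comap, MulEquiv.coe_toMonoidHom, MulAut.conj_apply] at ha hy ⊢
    have e : x * (a⁻¹ * y * a) * x⁻¹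
        = (x*a*x⁻¹)⁻¹ * (x*y*x⁻¹) * (x*a*x⁻¹) := by group
    rw [e]
    exact C.conj i _ ha _ hy
  trans i := by
    have hmem : ∀ z : G, (z ∈ (C.N (i+1)).comap (MulAut.conj x).toMonoidHom) ↔ x*z*x⁻¹ ∈ C.N (i+1) := by
      intro z; simp [Subgroup.mem_comap]
    refine ⟨(C.trans i).1.map (fun a b hab => by
      have : x * (x⁻¹ * a * x) * x⁻¹ = x * (x⁻¹ * b * x) * x⁻¹ := by rw [hab]
      simpa [mul_assoc] using this), ?_, ?_⟩
    · intro t ht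
      obtain ⟨a, ha, rfl⟩ := List.mem_map.mp ht
      simp only [Subgroup.mem_comap, MulEquiv.coe_toMonoidHom, MulAut.conj_apply]
      have e : x * (x⁻¹ * a * x) * x⁻¹ = a := by group
      rw [e]
      exact (C.trans i).2.1 a ha
    · intro y hy
      rw [hmem] at hy
      obtain ⟨t, ⟨htL, htH⟩, huniq⟩ := (C.trans i).2.2 (x*y*x⁻¹) hy
      have hcond : ∀ a : G, (y * (x⁻¹ * a * x)⁻¹ ∈ (C.N i).comap (MulAut.conj x).toMonoidHom)
          ↔ (x*y*x⁻¹) * a⁻¹ ∈ C.N i := by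
        intro a
        simp only [Subgroup.mem_comap, MulEquiv.coe_toMonoidHom, MulAut.conj_apply]
        have e : x * (y * (x⁻¹ * a * x)⁻¹) * x⁻¹ = (x*y*x⁻¹) * a⁻¹ := by group
        rw [e]
      refine ⟨x⁻¹ * t * x, ⟨List.mem_map.mpr ⟨t, htL, rfl⟩, (hcond t).mpr htH⟩, ?_⟩
      rintro t' ⟨ht'L, ht'H⟩
      obtain ⟨a, haL, rfl⟩ := List.mem_map.mp ht'L
      have : a = t := huniq a ⟨haL, (hcond a).mp ht'H⟩
      rw [this]

lemma cv_conjC (x : G) (u : MonoidAlgebra ℤ G) (i : ℕ) :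
    cv (C.conjC x) (conjBy x u) i = conjBy x (cv C u i) := by
  induction i with
  | zero => rfl
  | succ i ih =>
    show ((((C.conjC x).T i).map fun h => conjBy h (cv (C.conjC x) (conjBy x u) i)).prod) = _
    rw [ih]
    show ((((C.T i).map fun t => x⁻¹ * t * x).map fun h => conjBy h (conjBy x (cv C u i))).prod) = _
    rw [List.map_map]
    have e : ((fun h => conjBy h (conjBy x (cv C u i))) ∘ fun t => x⁻¹ * t * x)
        = fun t => conjBy x (conjBy t (cv C u i)) := by
      funext t
      show conjBy (x⁻¹ * t * x) (conjBy x (cv C u i)) = _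
      rw [conjBy_comp, conjBy_comp]
      congr 1
      group
    rw [e]
    show ((C.T i).map (conjBy x ∘ fun t => conjBy t (cv C u i))).prod = _
    rw [← List.map_map, ← conjBy_listProd]
    rfl

lemma card_lt_of_lt [Fintype G] {H K : Subgroup G} (h : H < K) : Nat.card H < Nat.card K := by
  have h1 : (H : Set G) ⊂ (K : Set G) := SetLike.coe_ssubset_coe.mpr h
  have h2 : Nat.card H = (H : Set G).ncard := Nat.card_coe_set_eq _
  have h3 : Nat.card K = (K : Set G).ncard := Nat.card_coe_set_eq _
  rw [h2, h3]
  exact Set.ncard_lt_ncard h1 (Set.toFinite _)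

lemma card_le_of_le [Fintype G] {H K : Subgroup G} (h : H ≤ K) : Nat.card H ≤ Nat.card K := by
  have h2 : Nat.card H = (H : Set G).ncard := Nat.card_coe_set_eq _
  have h3 : Nat.card K = (K : Set G).ncard := Nat.card_coe_set_eq _
  rw [h2, h3]
  exact Set.ncard_le_ncard h (Set.toFinite _)

lemma prod_flatMap {α : Type*} {M : Type*} [Monoid M] (l : List α) (f : α → List M) :
    (l.flatMap f).prod = (l.map fun a => (f a).prod).prod := by
  induction l with
  | nil => simp
  | cons a l ih => rw [List.flatMap_cons, List.prod_append, ih, List.map_cons, List.prod_cons]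

lemma chain_le {C : Chain G} {i j : ℕ} (h : i ≤ j) : C.N i ≤ C.N j := by
  induction j, h using Nat.le_induction with
  | base => exact le_rfl
  | succ j hij ih => exact le_trans ih (C.mono j)

/-- flattening two stacked transversals. -/
lemma isTrans_flat {H M K : Subgroup G} {LD LM : List G} (hHM' : H ≤ M) (hMK : M ≤ K)
    (h1 : IsTrans H M LD) (h2 : IsTrans M K LM) :
    IsTrans H K (LM.flatMap fun h => LD.map (· * h)) := by
  have hHM : ∀ d ∈ LD, d ∈ M := h1.2.1
  -- key: d * h = d' * h' with d,d' ∈ M forces h = h'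
  have hkey : ∀ h ∈ LM, ∀ h' ∈ LM, ∀ d ∈ LD, ∀ d' ∈ LD, d * h = d' * h' → h = h' := by
    intro h hh h' hh' d hd d' hd' heq
    obtain ⟨t, -, huniq⟩ := h2.2.2 h (h2.2.1 h hh)
    have e1 : h = t := huniq h ⟨hh, by simpa using M.one_mem⟩
    have e2 : h' = t := by
      refine huniq h' ⟨hh', ?_⟩
      have e : h * h'⁻¹ = d⁻¹ * d' := by
        have e2 := congrArg (fun z => d⁻¹ * z * h'⁻¹) heq
        simpa [mul_assoc] using e2
      rw [e]
      exact M.mul_mem (M.inv_mem (hHM d hd)) (hHM d' hd')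
    rw [e1, e2]
  refine ⟨?_, ?_, ?_⟩
  · rw [List.nodup_flatMap]
    constructor
    · intro h _
      exact h1.1.map fun a b => by simp
    · refine h2.1.imp_of_mem ?_
      intro a b ha hb hab
      intro q hqa hqb
      obtain ⟨d, hd, rfl⟩ := List.mem_map.mp hqa
      obtain ⟨d', hd', heq⟩ := List.mem_map.mp hqb
      exact hab (hkey a ha b hb d hd d' hd' heq.symm)
  · intro q hq
    obtain ⟨h, hh, hq2⟩ := List.mem_flatMap.mp hq
    obtain ⟨d, hd, rfl⟩ := List.mem_map.mp hq2
    exact K.mul_mem (hMK (hHM d hd)) (h2.2.1 h hh)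
  · intro y hy
    obtain ⟨h, ⟨hhL, hhM⟩, huniqh⟩ := h2.2.2 y hy
    obtain ⟨d, ⟨hdL, hdH⟩, huniqd⟩ := h1.2.2 (y * h⁻¹) hhM
    refine ⟨d * h, ⟨List.mem_flatMap.mpr ⟨h, hhL, List.mem_map.mpr ⟨d, hdL, rfl⟩⟩, ?_⟩, ?_⟩
    · have e : y * (d * h)⁻¹ = y * h⁻¹ * d⁻¹ := by group
      rw [e]; exact hdH
    · rintro q ⟨hqL, hqH⟩
      obtain ⟨h', hh'L, hq2⟩ := List.mem_flatMap.mp hqL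
      obtain ⟨d', hd'L, rfl⟩ := List.mem_map.mp hq2
      have hyH : y * h'⁻¹ * d'⁻¹ ∈ H := by
        have e : y * (d' * h')⁻¹ = y * h'⁻¹ * d'⁻¹ := by group
        rwa [e] at hqH
      have hh' : h' = h := by
        refine huniqh h' ⟨hh'L, ?_⟩
        have e : y * h'⁻¹ = (y * h'⁻¹ * d'⁻¹) * d' := by group
        rw [e]
        exact M.mul_mem (hHM' hyH) (hHM d' hd'L)
      subst hh'
      have hd' : d' = d := by
        refine huniqd d' ⟨hd'L, ?_⟩
        have e : y * h'⁻¹ * d'⁻¹ = y * (d' * h')⁻¹ := by group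
        rw [e]; exact hqH
      rw [hd']

noncomputable def mkChain [Fintype G] (N : ℕ → Subgroup G) (hmono : ∀ i, N i ≤ N (i+1))
    (hconj : ∀ i, ∀ x ∈ N (i+1), ∀ y ∈ N i, x⁻¹ * y * x ∈ N i) : Chain G where
  N := N
  T := fun i => Classical.choose (exists_isTrans (N i) (N (i+1)))
  mono := hmono
  conj := hconj
  trans := fun i => Classical.choose_spec (exists_isTrans (N i) (N (i+1)))

/-- intersected chain: `j ↦ N j ⊓ M` for `j ≤ r`, then constant `N r`. -/
def interN (C : Chain G) (r : ℕ) (M : Subgroup G) : ℕ → Subgroup G :=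
  fun j => if j ≤ r then C.N j ⊓ M else C.N r

lemma interN_mono (C : Chain G) (r : ℕ) (M : Subgroup G) (j : ℕ) :
    interN C r M j ≤ interN C r M (j+1) := by
  unfold interN
  by_cases h1 : j + 1 ≤ r
  · rw [if_pos (le_trans (Nat.le_succ j) h1), if_pos h1]
    exact inf_le_inf_right M (C.mono j)
  · by_cases h2 : j ≤ r
    · rw [if_pos h2, if_neg h1]
      have : j = r := le_antisymm h2 (by omega)
      subst this
      exact inf_le_left
    · rw [if_neg h2, if_neg h1]

lemma interN_conj (C : Chain G) (r : ℕ) (M : Subgroup G)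
    (hM : ∀ x ∈ C.N r, ∀ y ∈ M, x⁻¹ * y * x ∈ M) (j : ℕ) :
    ∀ x ∈ interN C r M (j+1), ∀ y ∈ interN C r M j, x⁻¹ * y * x ∈ interN C r M j := by
  unfold interN
  by_cases h1 : j + 1 ≤ r
  · rw [if_pos (le_trans (Nat.le_succ j) h1), if_pos h1]
    rintro x ⟨hx1, hx2⟩ y ⟨hy1, hy2⟩
    exact ⟨C.conj j x hx1 y hy1, M.mul_mem (M.mul_mem (M.inv_mem hx2) hy2) hx2⟩
  · by_cases h2 : j ≤ r
    · rw [if_pos h2, if_neg h1]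
      have : j = r := le_antisymm h2 (by omega)
      subst this
      rintro x hx y ⟨hy1, hy2⟩
      exact ⟨(C.N j).mul_mem ((C.N j).mul_mem ((C.N j).inv_mem hx) hy1) hx, hM x hx y hy2⟩
    · rw [if_neg h2, if_neg h1]
      intro x hx y hy
      exact (C.N r).mul_mem ((C.N r).mul_mem ((C.N r).inv_mem hx) hy) hx

lemma nested_prod (LM LD : List G) (w : MonoidAlgebra ℤ G) :
    ((LM.flatMap fun h => LD.map (· * h)).map fun q => conjBy q w).prod
      = (LM.map fun h => conjBy h ((LD.map fun d => conjBy d w).prod)).prod := by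
  rw [List.map_flatMap, prod_flatMap]
  congr 1
  apply List.map_congr_left
  intro h _
  rw [conjBy_listProd, List.map_map, List.map_map]
  congr 1
  apply List.map_congr_left
  intro d _
  show conjBy (d * h) w = conjBy h (conjBy d w)
  rw [conjBy_comp]

theorem cv_indep [Fintype G] (c : ℕ) :
    ∀ (rs : ℕ) (C C' : Chain G) (r s : ℕ) (u : MonoidAlgebra ℤ G),
      IsCtr (C.N 0) u → C.N 0 = C'.N 0 → C.N r = C'.N s →
      Nat.card (C.N r) ≤ c → r + s ≤ rs → cv C u r = cv C' u s := by
  induction c using Nat.strong_induction_on with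
  | _ c IHc =>
  intro rs
  induction rs using Nat.strong_induction_on with
  | _ rs IHrs =>
  intro C C' r s u hu hbase htop hcard hlen
  rcases r with _ | r' <;> rcases s with _ | s'
  · -- r = 0, s = 0
    rfl
  · -- r = 0, s = s'+1
    have hu' : IsCtr (C'.N 0) u := hbase ▸ hu
    have hdrop : C'.N s' = C'.N (s'+1) := by
      refine le_antisymm (C'.mono s') ?_
      calc C'.N (s'+1) = C.N 0 := htop.symm
        _ = C'.N 0 := hbase
        _ ≤ C'.N s' := chain_le (Nat.zero_le s')
    rw [cv_drop hu' s' hdrop]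
    exact IHrs s' (by omega) C C' 0 s' u hu hbase (htop.trans hdrop.symm) hcard (by omega)
  · -- r = r'+1, s = 0
    have hdrop : C.N r' = C.N (r'+1) := by
      refine le_antisymm (C.mono r') ?_
      calc C.N (r'+1) = C'.N 0 := htop
        _ = C.N 0 := hbase.symm
        _ ≤ C.N r' := chain_le (Nat.zero_le r')
    rw [cv_drop hu r' hdrop]
    refine IHrs r' (by omega) C C' r' 0 u hu hbase (hdrop.trans htop) ?_ (by omega)
    rw [hdrop]; exact hcard
  · -- r = r'+1, s = s'+1
    by_cases hdN : C.N r' = C.N (r'+1)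
    · rw [cv_drop hu r' hdN]
      refine IHrs (r' + (s'+1)) (by omega) C C' r' (s'+1) u hu hbase (hdN.trans htop) ?_ (by omega)
      rw [hdN]; exact hcard
    · have hu' : IsCtr (C'.N 0) u := hbase ▸ hu
      by_cases hdM : C'.N s' = C'.N (s'+1)
      · rw [cv_drop hu' s' hdM]
        refine IHrs ((r'+1) + s') (by omega) C C' (r'+1) s' u hu hbase (htop.trans hdM.symm) ?_ (by omega)
        exact hcard
      · -- butterfly case
        set B := C.N 0 with hB
        set Q := C.N (r'+1) with hQdef
        set Np := C.N r' with hNp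
        set Mp := C'.N s' with hMp
        have hQ' : C'.N (s'+1) = Q := htop.symm
        have hNpQ : Np ≤ Q := C.mono r'
        have hMpQ : Mp ≤ Q := by rw [← hQ']; exact C'.mono s'
        have hNplt : Np < Q := lt_of_le_of_ne hNpQ hdN
        have hMplt : Mp < Q := by
          have := lt_of_le_of_ne (C'.mono s') hdM
          rwa [hQ'] at this
        have hBNp : B ≤ Np := chain_le (Nat.zero_le r')
        have hBMp : B ≤ Mp := by
          have h0 : C'.N 0 ≤ Mp := chain_le (Nat.zero_le s')
          rw [← hbase] at h0
          exact h0
        have hMnorm : ∀ x ∈ Q, ∀ y ∈ Mp, x⁻¹ * y * x ∈ Mp := by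
          intro x hx y hy
          exact C'.conj s' x (by rw [hQ']; exact hx) y hy
        have hNnorm : ∀ x ∈ Q, ∀ y ∈ Np, x⁻¹ * y * x ∈ Np := C.conj r'
        set C₁ : Chain G := mkChain (interN C r' Mp) (interN_mono _ _ _)
          (interN_conj _ _ _ (fun x hx => hMnorm x (hNpQ hx))) with hC₁def
        set C₂ : Chain G := mkChain (interN C' s' Np) (interN_mono _ _ _)
          (interN_conj _ _ _ (fun x hx => hNnorm x (hMpQ hx))) with hC₂def
        have hC₁0 : C₁.N 0 = B := by
          show interN C r' Mp 0 = B
          unfold interN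
          rw [if_pos (Nat.zero_le r')]
          exact inf_eq_left.mpr hBMp
        have hC₁r : C₁.N r' = Np ⊓ Mp := by
          show interN C r' Mp r' = Np ⊓ Mp
          unfold interN
          rw [if_pos le_rfl]
        have hC₁r1 : C₁.N (r'+1) = Np := by
          show interN C r' Mp (r'+1) = Np
          unfold interN
          rw [if_neg (by omega)]
        have hC₂0 : C₂.N 0 = B := by
          show interN C' s' Np 0 = B
          unfold interN
          rw [if_pos (Nat.zero_le s'), ← hbase]
          exact inf_eq_left.mpr hBNp
        have hC₂s : C₂.N s' = Mp ⊓ Np := by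
          show interN C' s' Np s' = Mp ⊓ Np
          unfold interN
          rw [if_pos le_rfl]
        have hC₂s1 : C₂.N (s'+1) = Mp := by
          show interN C' s' Np (s'+1) = Mp
          unfold interN
          rw [if_neg (by omega)]
        have hcardNp : Nat.card Np < c := lt_of_lt_of_le (card_lt_of_lt hNplt) hcard
        have hcardMp : Nat.card Mp < c := lt_of_lt_of_le (card_lt_of_lt hMplt) hcard
        have hA : cv C u r' = cv C₁ u (r'+1) :=
          IHc (Nat.card Np) hcardNp (r' + (r'+1)) C C₁ r' (r'+1) u hu
            hC₁0.symm hC₁r1.symm le_rfl le_rfl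
        have hBB : cv C' u s' = cv C₂ u (s'+1) :=
          IHc (Nat.card Mp) hcardMp (s' + (s'+1)) C' C₂ s' (s'+1) u hu'
            (by rw [hC₂0, hbase]) hC₂s1.symm le_rfl le_rfl
        set w := cv C₁ u r' with hw
        set w' := cv C₂ u s' with hw'
        have hu₁ : IsCtr (C₁.N 0) u := by rw [hC₁0]; exact hu
        have hu₂ : IsCtr (C₂.N 0) u := by rw [hC₂0]; exact hu
        have hD : w = w' := by
          refine IHc (Nat.card (Np ⊓ Mp : Subgroup G))
            (lt_of_le_of_lt (card_le_of_le inf_le_left) hcardNp) (r' + s')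
            C₁ C₂ r' s' u hu₁ (by rw [hC₁0, hC₂0]) ?_ ?_ le_rfl
          · rw [hC₁r, hC₂s, inf_comm]
          · rw [hC₁r]
        have hwctr : IsCtr (Np ⊓ Mp) w := by
          have := cv_ctr hu₁ r'
          rwa [hC₁r] at this
        have hDnorm : ∀ x ∈ Q, ∀ y ∈ (Np ⊓ Mp : Subgroup G), x⁻¹ * y * x ∈ Np ⊓ Mp := by
          intro x hx y hy
          have h1 := (Subgroup.mem_inf.mp hy).1
          have h2 := (Subgroup.mem_inf.mp hy).2
          exact Subgroup.mem_inf.mpr ⟨hNnorm x hx y h1, hMnorm x hx y h2⟩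
        have hTC₁ : IsTrans (Np ⊓ Mp) Np (C₁.T r') := by
          have := C₁.trans r'
          rwa [hC₁r, hC₁r1] at this
        have hTC₂ : IsTrans (Np ⊓ Mp) Mp (C₂.T s') := by
          have := C₂.trans s'
          rw [hC₂s, hC₂s1] at this
          rwa [inf_comm] at this
        have hTC : IsTrans Np Q (C.T r') := C.trans r'
        have hTC' : IsTrans Mp Q (C'.T s') := by
          have := C'.trans s'
          rwa [hQ'] at this
        have hflat1 : IsTrans (Np ⊓ Mp) Q ((C.T r').flatMap fun h => (C₁.T r').map (· * h)) :=
          isTrans_flat inf_le_left hNpQ hTC₁ hTC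
        have hflat2 : IsTrans (Np ⊓ Mp) Q ((C'.T s').flatMap fun h => (C₂.T s').map (· * h)) :=
          isTrans_flat inf_le_right hMpQ hTC₂ hTC'
        have hL : cv C u (r'+1)
            = (((C.T r').flatMap fun h => (C₁.T r').map (· * h)).map fun q => conjBy q w).prod := by
          rw [nested_prod]
          show _ = ((C.T r').map fun h => conjBy h ((((C₁.T r')).map fun d => conjBy d w).prod)).prod
          show ((C.T r').map fun h => conjBy h (cv C u r')).prod = _
          rw [hA]
          rfl
        have hR : cv C' u (s'+1)
            = (((C'.T s').flatMap fun h => (C₂.T s').map (· * h)).map fun q => conjBy q w').prod := by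
          rw [nested_prod]
          show ((C'.T s').map fun h => conjBy h (cv C' u s')).prod = _
          rw [hBB]
          rfl
        rw [hL, hR, ← hD]
        exact trans_prod_eq (Np ⊓ Mp) Q hDnorm hwctr hflat1 hflat2

/-! ### Bass unit algebra -/

noncomputable def psum (h : G) (c : ℕ) : MonoidAlgebra ℤ G :=
  ∑ i ∈ Finset.range c, σ (h ^ i)

noncomputable def hat (h : G) : MonoidAlgebra ℤ G := psum h (orderOf h)

lemma hat_def (h : G) : hat h = ∑ i ∈ Finset.range (orderOf h), σ (h ^ i) := rfl

lemma of_commute (h : G) (i j : ℕ) : Commute (σ (h^i)) (σ (h^j)) := by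
  unfold Commute SemiconjBy
  rw [of_mul_of, of_mul_of, ← pow_add, ← pow_add, add_comm]

lemma psum_commute (h : G) (f g : ℕ → ℕ) (c d : ℕ) :
    Commute (∑ i ∈ Finset.range c, σ (h^(f i))) (∑ j ∈ Finset.range d, σ (h^(g j))) := by
  refine Commute.sum_left _ _ _ ?_
  intro i _
  refine Commute.sum_right _ _ _ ?_
  intro j _
  exact of_commute h (g j) (f i) |>.symm

lemma of_mul_psum (h : G) : σ h * psum h (orderOf h) = psum h (orderOf h) := by
  unfold psum
  rw [Finset.mul_sum]
  have e : ∀ i, σ h * σ (h^i) = σ (h^(i+1)) := by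
    intro i
    rw [of_mul_of, ← pow_succ']
  simp only [e]
  have e1 := Finset.sum_range_succ' (fun i => σ (h^i)) (orderOf h)
  have e2 := Finset.sum_range_succ (fun i => σ (h^i)) (orderOf h)
  rw [e1] at e2
  have e3 : σ (h ^ orderOf h) = σ (h ^ (0:ℕ)) := by rw [pow_orderOf_eq_one, pow_zero]
  rw [e3] at e2
  exact add_right_cancel e2

lemma psum_mul_of (h : G) : psum h (orderOf h) * σ h = psum h (orderOf h) := by
  unfold psum
  rw [Finset.sum_mul]
  have e : ∀ i, σ (h^i) * σ h = σ (h^(i+1)) := by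
    intro i
    rw [of_mul_of, ← pow_succ]
  simp only [e]
  have e1 := Finset.sum_range_succ' (fun i => σ (h^i)) (orderOf h)
  have e2 := Finset.sum_range_succ (fun i => σ (h^i)) (orderOf h)
  rw [e1] at e2
  have e3 : σ (h ^ orderOf h) = σ (h ^ (0:ℕ)) := by rw [pow_orderOf_eq_one, pow_zero]
  rw [e3] at e2
  exact add_right_cancel e2

lemma of_pow_mul_hat (h : G) (j : ℕ) : σ (h^j) * hat h = hat h := by
  induction j with
  | zero => rw [pow_zero, of_one, one_mul]
  | succ j ih =>
    have e : σ (h^(j+1)) = σ (h^j) * σ h := by rw [of_mul_of, ← pow_succ]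
    rw [e, mul_assoc]
    show σ (h^j) * (σ h * psum h (orderOf h)) = _
    rw [of_mul_psum]
    exact ih

lemma hat_mul_of_pow (h : G) (j : ℕ) : hat h * σ (h^j) = hat h := by
  induction j with
  | zero => rw [pow_zero, of_one, mul_one]
  | succ j ih =>
    have e : σ (h^(j+1)) = σ h * σ (h^j) := by rw [of_mul_of, ← pow_succ']
    rw [e, ← mul_assoc]
    show (psum h (orderOf h) * σ h) * σ (h^j) = _
    rw [psum_mul_of]
    exact ih

lemma psum_mul_hat (h : G) (c : ℕ) : psum h c * hat h = (c:ℤ) • hat h := by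
  unfold psum
  rw [Finset.sum_mul]
  have e : ∀ i ∈ Finset.range c, σ (h^i) * hat h = hat h := fun i _ => of_pow_mul_hat h i
  rw [Finset.sum_congr rfl e, Finset.sum_const, Finset.card_range, natCast_zsmul]

lemma psum_pow_mul_hat (h : G) (a t : ℕ) : (psum h a)^t * hat h = ((a:ℤ)^t) • hat h := by
  induction t with
  | zero => simp
  | succ t ih =>
    rw [pow_succ, mul_assoc, psum_mul_hat, mul_smul_comm, ih, smul_smul, pow_succ]
    congr 1
    ring

lemma hat_mul_sumpow (h : G) (f : ℕ → ℕ) (b : ℕ) :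
    hat h * (∑ j ∈ Finset.range b, σ (h^(f j))) = (b:ℤ) • hat h := by
  rw [Finset.mul_sum]
  have e : ∀ j ∈ Finset.range b, hat h * σ (h^(f j)) = hat h := fun j _ => hat_mul_of_pow h (f j)
  rw [Finset.sum_congr rfl e, Finset.sum_const, Finset.card_range, natCast_zsmul]

lemma hat_mul_sumpow_pow (h : G) (f : ℕ → ℕ) (b t : ℕ) :
    hat h * (∑ j ∈ Finset.range b, σ (h^(f j)))^t = ((b:ℤ)^t) • hat h := by
  induction t with
  | zero => simp
  | succ t ih =>
    rw [pow_succ, ← mul_assoc, ih, smul_mul_assoc, hat_mul_sumpow, smul_smul, pow_succ]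

lemma hat_mul_hat (h : G) : hat h * hat h = ((orderOf h : ℤ)) • hat h := by
  show psum h (orderOf h) * hat h = _
  rw [psum_mul_hat]

lemma psum_mul_shifted (h : G) (a b : ℕ) (ha : 0 < a) :
    psum h a * (∑ j ∈ Finset.range b, σ (h^(a*j))) = psum h (a*b) := by
  unfold psum
  rw [Finset.sum_mul_sum]
  have e : ∀ i j, σ (h^i) * σ (h^(a*j)) = σ (h^(i + a*j)) := by
    intro i j
    rw [of_mul_of, ← pow_add]
  rw [show (∑ i ∈ Finset.range a, ∑ j ∈ Finset.range b, σ (h ^ i) * σ (h ^ (a * j)))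
      = ∑ p ∈ Finset.range a ×ˢ Finset.range b, σ (h^(p.1 + a * p.2)) by
    rw [Finset.sum_product]
    exact Finset.sum_congr rfl fun i _ => Finset.sum_congr rfl fun j _ => e i j]
  refine Finset.sum_nbij' (fun p => p.1 + a * p.2) (fun m => (m % a, m / a)) ?_ ?_ ?_ ?_ ?_
  · rintro ⟨i, j⟩ hp
    simp only [Finset.mem_product, Finset.mem_range] at hp ⊢
    calc i + a * j < a + a * j := by omega
      _ = a * (j+1) := by ring
      _ ≤ a * b := Nat.mul_le_mul_left a hp.2
  · intro m hm
    simp only [Finset.mem_product, Finset.mem_range] at hm ⊢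
    constructor
    · exact Nat.mod_lt m ha
    · exact Nat.div_lt_of_lt_mul (by rw [mul_comm] at hm ⊢; exact hm)
  · rintro ⟨i, j⟩ hp
    simp only [Finset.mem_product, Finset.mem_range] at hp
    have h1 : (i + a * j) % a = i := by
      rw [Nat.add_mul_mod_self_left, Nat.mod_eq_of_lt hp.1]
    have h2 : (i + a * j) / a = j := by
      rw [Nat.add_mul_div_left _ _ ha, Nat.div_eq_of_lt hp.1, zero_add]
    simp [h1, h2]
  · intro m _
    simp [Nat.mod_add_div]
  · intro p _
    rfl

/-- if `a` is invertible mod `orderOf h`, then `h^a` has the same order. -/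
lemma orderOf_pow_eq_of_inv (h : G) (a b' : ℕ) (hab : a * b' ≡ 1 [MOD orderOf h]) :
    orderOf (h^a) = orderOf h := by
  set n := orderOf h with hn
  set m := orderOf (h^a) with hm
  have h1 : m ∣ n := by
    apply orderOf_dvd_of_pow_eq_one
    rw [← pow_mul, mul_comm, pow_mul, pow_orderOf_eq_one, one_pow]
  have h2 : n ∣ a * m := by
    apply orderOf_dvd_of_pow_eq_one
    rw [pow_mul, pow_orderOf_eq_one]
  have h3 : n ∣ m := by
    have e1 : m * (a * b') ≡ m * 1 [MOD n] := Nat.ModEq.mul_left m hab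
    have e2 : n ∣ m * (a * b') := by
      obtain ⟨q, hq⟩ := h2
      exact ⟨q * b', by rw [← mul_assoc, mul_comm m a, hq]; ring⟩
    have e3 : m * (a*b') ≡ 0 [MOD n] := (Nat.modEq_zero_iff_dvd).mpr e2
    have : m * 1 ≡ 0 [MOD n] := e1.symm.trans e3
    rw [mul_one] at this
    exact (Nat.modEq_zero_iff_dvd).mp this
  exact Nat.dvd_antisymm h1 h3

lemma sum_pow_eq_hat [Fintype G] (h : G) (a b' : ℕ) (hab : a * b' ≡ 1 [MOD orderOf h]) :
    ∑ i ∈ Finset.range (orderOf h), σ ((h^a)^i) = hat h := by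
  classical
  set n := orderOf h with hn
  have hnpos : 0 < n := orderOf_pos h
  have hinj1 : ∀ x ∈ Finset.range n, ∀ y ∈ Finset.range n, h^x = h^y → x = y := by
    intro x hx y hy hxy
    rw [Finset.mem_range] at hx hy
    have := pow_eq_pow_iff_modEq.mp hxy
    rw [Nat.ModEq] at this
    rwa [Nat.mod_eq_of_lt hx, Nat.mod_eq_of_lt hy] at this
  have hord : orderOf (h^a) = n := orderOf_pow_eq_of_inv h a b' hab
  have hinj2 : ∀ x ∈ Finset.range n, ∀ y ∈ Finset.range n, (h^a)^x = (h^a)^y → x = y := by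
    intro x hx y hy hxy
    rw [Finset.mem_range] at hx hy
    have := pow_eq_pow_iff_modEq.mp hxy
    rw [hord, Nat.ModEq] at this
    rwa [Nat.mod_eq_of_lt hx, Nat.mod_eq_of_lt hy] at this
  have himg : Finset.image (fun i => (h^a)^i) (Finset.range n)
      = Finset.image (fun i => h^i) (Finset.range n) := by
    apply Finset.Subset.antisymm
    · intro z hz
      obtain ⟨i, hi, rfl⟩ := Finset.mem_image.mp hz
      refine Finset.mem_image.mpr ⟨(a*i) % n, Finset.mem_range.mpr (Nat.mod_lt _ hnpos), ?_⟩
      rw [← pow_mul]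
      rw [hn, pow_mod_orderOf]
    · intro z hz
      obtain ⟨i, hi, rfl⟩ := Finset.mem_image.mp hz
      refine Finset.mem_image.mpr ⟨(b'*i) % n, Finset.mem_range.mpr (Nat.mod_lt _ hnpos), ?_⟩
      rw [← pow_mul]
      have : a * (b' * i % n) ≡ i [MOD n] := by
        calc a * (b' * i % n) ≡ a * (b' * i) [MOD n] := Nat.ModEq.mul_left a (Nat.mod_mod_of_dvd _ dvd_rfl ▸ (Nat.mod_modEq (b'*i) n))
          _ = (a * b') * i := by ring
          _ ≡ 1 * i [MOD n] := Nat.ModEq.mul_right i hab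
          _ = i := by ring
      exact pow_eq_pow_iff_modEq.mpr (by rw [← hn]; exact this)
  have e1 : ∑ i ∈ Finset.range n, σ ((h^a)^i)
      = ∑ z ∈ Finset.image (fun i => (h^a)^i) (Finset.range n), σ z :=
    (Finset.sum_image hinj2).symm
  have e2 : ∑ i ∈ Finset.range n, σ (h^i)
      = ∑ z ∈ Finset.image (fun i => h^i) (Finset.range n), σ z :=
    (Finset.sum_image hinj1).symm
  rw [e1, himg, ← e2]
  rfl

lemma psum_def (h : G) (c : ℕ) : psum h c = ∑ i ∈ Finset.range c, σ (h ^ i) := rfl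

lemma bass_mul [Fintype G] (h : G) (a b t : ℕ) (hapos : 0 < a)
    (hai : ∃ a', a * a' ≡ 1 [MOD orderOf h])
    (hda : ((orderOf h : ℤ)) ∣ 1 - (a:ℤ)^t) (hdb : ((orderOf h : ℤ)) ∣ 1 - (b:ℤ)^t) :
    bassElem h a t * bassElem (h^a) b t = bassElem h (a*b) t := by
  obtain ⟨a', ha'⟩ := hai
  have hnpos : 0 < orderOf h := orderOf_pos h
  have hnZ : ((orderOf h : ℤ)) ≠ 0 := by exact_mod_cast hnpos.ne'
  have hord : orderOf (h^a) = orderOf h := orderOf_pow_eq_of_inv h a a' ha'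
  obtain ⟨A, hA⟩ := hda
  obtain ⟨B, hB⟩ := hdb
  set n := orderOf h with hn
  set HH := hat h with hHH
  set X : MonoidAlgebra ℤ G := ∑ j ∈ Finset.range b, σ (h^(a*j)) with hX
  have e1 : bassElem h a t = (psum h a)^t + A • HH := by
    unfold bassElem
    rw [psum_def]
    congr 1
    rw [show ((1 - (a:ℤ)^t) / (n:ℤ)) = A by rw [hA, Int.mul_ediv_cancel_left _ hnZ]]
    rfl
  have e2 : bassElem (h^a) b t = X^t + B • HH := by
    unfold bassElem
    rw [hord]
    have efst : ∑ i ∈ Finset.range b, σ ((h^a)^i) = X := by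
      rw [hX]
      exact Finset.sum_congr rfl fun i _ => by rw [← pow_mul]
    have esnd : ∑ i ∈ Finset.range n, σ ((h^a)^i) = HH := sum_pow_eq_hat h a a' ha'
    rw [efst, esnd,
      show ((1 - (b:ℤ)^t) / (n:ℤ)) = B by rw [hB, Int.mul_ediv_cancel_left _ hnZ]]
  have e3 : bassElem h (a*b) t = (psum h (a*b))^t + (B * (a:ℤ)^t + (A * (b:ℤ)^t + A*B*(n:ℤ))) • HH := by
    unfold bassElem
    rw [psum_def]
    congr 1
    have hprod : (1:ℤ) - ((a*b : ℕ):ℤ)^t = (n:ℤ) * (B * (a:ℤ)^t + (A * (b:ℤ)^t + A*B*(n:ℤ))) := by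
      push_cast
      linear_combination ((b:ℤ)^t + (n:ℤ)*B) * hA + hB
    rw [show ((1 - ((a*b : ℕ):ℤ)^t) / (n:ℤ)) = B * (a:ℤ)^t + (A * (b:ℤ)^t + A*B*(n:ℤ)) by
      rw [hprod, Int.mul_ediv_cancel_left _ hnZ]]
    rfl
  rw [e1, e2, e3]
  have hcomm : Commute (psum h a) X := by
    rw [psum_def, hX]
    exact psum_commute h (fun i => i) (fun j => a*j) a b
  have h1 : (psum h a)^t * X^t = (psum h (a*b))^t := by
    rw [← hcomm.mul_pow, psum_mul_shifted h a b hapos]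
  have h2 : (psum h a)^t * (B • HH) = (B * (a:ℤ)^t) • HH := by
    rw [mul_smul_comm, hHH, psum_pow_mul_hat, smul_smul]
  have h3 : (A • HH) * X^t = (A * (b:ℤ)^t) • HH := by
    rw [smul_mul_assoc, hHH, hX, hat_mul_sumpow_pow, smul_smul]
  have h4 : (A • HH) * (B • HH) = (A * B * (n:ℤ)) • HH := by
    rw [smul_mul_assoc, mul_smul_comm, hHH, hat_mul_hat, smul_smul, smul_smul, ← hn]
  calc ((psum h a)^t + A • HH) * (X^t + B • HH)
      = (psum h a)^t * X^t + (psum h a)^t * (B • HH) + ((A • HH) * X^t + (A • HH) * (B • HH)) := by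
        rw [mul_add, add_mul, add_mul]
        abel
    _ = (psum h (a*b))^t + (B * (a:ℤ)^t) • HH + ((A * (b:ℤ)^t) • HH + (A * B * (n:ℤ)) • HH) := by
        rw [h1, h2, h3, h4]
    _ = (psum h (a*b))^t + (B * (a:ℤ)^t + (A * (b:ℤ)^t + A*B*(n:ℤ))) • HH := by
        rw [add_assoc]
        module

lemma psum_nq1 [Fintype G] (h : G) (q : ℕ) :
    psum h (orderOf h * q + 1) = 1 + (q:ℤ) • hat h := by
  induction q with
  | zero => simp [psum_def, of_one, single_one]
  | succ q ih =>
    have e : orderOf h * (q+1) + 1 = (orderOf h * q + 1) + orderOf h := by ring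
    rw [e, psum_def, Finset.sum_range_add, ← psum_def, ih]
    have e2 : ∑ i ∈ Finset.range (orderOf h), σ (h ^ (orderOf h * q + 1 + i))
        = σ (h ^ (orderOf h * q + 1)) * hat h := by
      rw [hat, psum_def, Finset.mul_sum]
      exact Finset.sum_congr rfl fun i _ => by rw [of_mul_of, ← pow_add]
    rw [e2, of_pow_mul_hat]
    push_cast
    rw [add_smul, one_smul]
    abel

lemma pow_one_add_hat [Fintype G] (h : G) (q : ℕ) (t : ℕ) :
    ∃ C : ℤ, ((orderOf h : ℤ)) * C = (1 + (orderOf h : ℤ)*q)^t - 1 ∧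
      (1 + (q:ℤ) • hat h)^t = 1 + C • hat h := by
  induction t with
  | zero => exact ⟨0, by simp, by simp⟩
  | succ t ih =>
    obtain ⟨C, hC1, hC2⟩ := ih
    refine ⟨(q:ℤ) + C + C*q*(orderOf h : ℤ), ?_, ?_⟩
    · rw [pow_succ]
      linear_combination ((1:ℤ) + (orderOf h : ℤ)*q) * hC1
    · rw [pow_succ, hC2]
      have e : (C • hat h) * ((q:ℤ) • hat h) = (C*q*(orderOf h : ℤ)) • hat h := by
        rw [smul_mul_assoc, mul_smul_comm, hat_mul_hat, smul_smul, smul_smul]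
      calc (1 + C • hat h) * (1 + (q:ℤ) • hat h)
          = 1 + (q:ℤ) • hat h + C • hat h + (C • hat h) * ((q:ℤ) • hat h) := by
            rw [mul_add, add_mul, add_mul]
            simp only [one_mul, mul_one]
            abel
        _ = 1 + ((q:ℤ) + C + C*q*(orderOf h:ℤ)) • hat h := by
            rw [e, add_smul, add_smul]
            abel

lemma bass_one [Fintype G] (h : G) (a t : ℕ) (hapos : 0 < a)
    (hmod : a ≡ 1 [MOD orderOf h]) : bassElem h a t = 1 := by
  have hnpos : 0 < orderOf h := orderOf_pos h
  have hnZ : ((orderOf h : ℤ)) ≠ 0 := by exact_mod_cast hnpos.ne'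
  have hdvd : orderOf h ∣ a - 1 := (Nat.modEq_iff_dvd' hapos).mp hmod.symm
  obtain ⟨q, hq⟩ := hdvd
  have ha : a = orderOf h * q + 1 := by omega
  obtain ⟨C, hC1, hC2⟩ := pow_one_add_hat h q t
  have haZ : (a:ℤ) = 1 + (orderOf h : ℤ) * q := by
    rw [ha]; push_cast; ring
  have hcoef : (1:ℤ) - (a:ℤ)^t = (orderOf h : ℤ) * (-C) := by
    rw [haZ]
    linear_combination hC1
  unfold bassElem
  rw [← psum_def, ← hat_def,
    show ((1 - (a:ℤ)^t) / (orderOf h : ℤ)) = -C by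
      rw [hcoef, Int.mul_ediv_cancel_left _ hnZ]]
  rw [ha, psum_nq1, hC2]
  rw [add_assoc, ← add_smul]
  simp

/-! ### glue -/

lemma conj_pow' (x h : G) (i : ℕ) : x⁻¹ * h^i * x = (x⁻¹ * h * x)^i := by
  induction i with
  | zero => simp
  | succ i ih =>
    rw [pow_succ, pow_succ, ← ih]
    group

lemma conj_zpow' (x h : G) (m : ℤ) : x⁻¹ * h^m * x = (x⁻¹ * h * x)^m := by
  have e : ∀ y : G, x⁻¹ * y * x = (MulAut.conj x⁻¹) y := by
    intro y
    rw [MulAut.conj_apply]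
    group
  rw [e, e, map_zpow]

lemma orderOf_conj (x h : G) : orderOf (x⁻¹ * h * x) = orderOf h := by
  have : x⁻¹ * h * x = (MulAut.conj x⁻¹) h := by
    rw [MulAut.conj_apply]; group
  rw [this]
  exact orderOf_injective (MulAut.conj x⁻¹).toMonoidHom (MulAut.conj x⁻¹).injective h

lemma conjBy_bassElem (x h : G) (m t : ℕ) :
    conjBy x (bassElem h m t) = bassElem (x⁻¹ * h * x) m t := by
  unfold bassElem
  rw [conjBy_add, conjBy_pow, conjBy_smul, conjBy_sum, conjBy_sum]
  rw [orderOf_conj]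
  congr 1
  · congr 1
    exact Finset.sum_congr rfl fun i _ => by rw [conjBy_of, conj_pow']
  · congr 1
    exact Finset.sum_congr rfl fun i _ => by rw [conjBy_of, conj_pow']

lemma isCtr_of_mem_zpowers {g : G} {w : MonoidAlgebra ℤ G}
    (hw : w ∈ sg (Subgroup.zpowers g)) : IsCtr (Subgroup.zpowers g) w := by
  refine ⟨hw, ?_⟩
  intro y hy
  induction hw using Submodule.span_induction with
  | mem z hz =>
    obtain ⟨z', hz', rfl⟩ := hz
    rw [conjBy_of]
    congr 1
    obtain ⟨m, rfl⟩ := Subgroup.mem_zpowers_iff.mp hy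
    obtain ⟨m', rfl⟩ := Subgroup.mem_zpowers_iff.mp hz'
    have : Commute (g^m) (g^m') := (Commute.refl g).zpow_zpow m m'
    calc (g^m)⁻¹ * g^m' * g^m = (g^m)⁻¹ * (g^m' * g^m) := by rw [mul_assoc]
      _ = (g^m)⁻¹ * (g^m * g^m') := by rw [this.eq]
      _ = g^m' := by group
  | zero => unfold conjBy; simp
  | add p q _ _ hp hq => rw [conjBy_add, hp, hq]
  | smul z p _ hp => rw [conjBy_smul, hp]

lemma bass_mem_sg (g : G) (c m t : ℕ) : bassElem (g^c) m t ∈ sg (Subgroup.zpowers g) := by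
  unfold bassElem
  have key : ∀ i : ℕ, (g^c)^i ∈ Subgroup.zpowers g := by
    intro i
    rw [← pow_mul]
    exact Subgroup.pow_mem _ (Subgroup.mem_zpowers g) _
  refine (sg _).add_mem ?_ ((sg _).smul_mem _ ?_)
  · exact pow_mem_sg (Submodule.sum_mem _ fun i _ => of_mem_sg (key i)) t
  · exact Submodule.sum_mem _ fun i _ => of_mem_sg (key i)

lemma exists_inv_mod {k n : ℕ} (hg : Nat.gcd k n = 1) : ∃ b, k * b ≡ 1 [MOD n] := by
  rcases Nat.lt_or_ge n 2 with hn | hn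
  · interval_cases n
    · have hk : k = 1 := by simpa using hg
      exact ⟨1, by simp [hk, Nat.ModEq]⟩
    · exact ⟨1, Nat.modEq_one⟩
  · obtain ⟨b, -, hb⟩ := Nat.exists_mul_mod_eq_one_of_coprime hg (by omega)
    refine ⟨b, ?_⟩
    show k * b % n = 1 % n
    rw [hb, Nat.mod_eq_of_lt (by omega)]

lemma dvd_one_sub_pow_of_modEq {a n t : ℕ} (ha : 0 < a) (h : a^t ≡ 1 [MOD n]) :
    (n:ℤ) ∣ 1 - (a:ℤ)^t := by
  have h1le : 1 ≤ a^t := Nat.one_le_pow t a ha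
  have h1 : n ∣ a^t - 1 := (Nat.modEq_iff_dvd' h1le).mp h.symm
  obtain ⟨c, hc⟩ := h1
  refine ⟨-c, ?_⟩
  have e : ((a^t - 1 : ℕ) : ℤ) = (a:ℤ)^t - 1 := by
    rw [Nat.cast_sub h1le]
    push_cast
    ring
  have e2 : ((a^t - 1 : ℕ) : ℤ) = ((n * c : ℕ) : ℤ) := by rw [hc]
  rw [e] at e2
  push_cast at e2
  linarith [e2]

theorem cv_conj_inv [Fintype G] (C : Chain G) (len : ℕ) (htopC : C.N len = ⊤)
    {x : G} (hn1 : ∀ y ∈ C.N 0, x⁻¹ * y * x ∈ C.N 0) (hn2 : ∀ y ∈ C.N 0, x * y * x⁻¹ ∈ C.N 0)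
    {u : MonoidAlgebra ℤ G} (hu : IsCtr (C.N 0) u) :
    cv C (conjBy x u) len = cv C u len := by
  have hux : IsCtr (C.N 0) (conjBy x u) := hu.conj hn1 hn2
  have hbase : C.N 0 = (C.conjC x).N 0 := by
    ext z
    show z ∈ C.N 0 ↔ z ∈ ((C.N 0).comap (MulAut.conj x).toMonoidHom)
    rw [Subgroup.mem_comap]
    simp only [MulEquiv.coe_toMonoidHom, MulAut.conj_apply]
    constructor
    · intro hz; exact hn2 z hz
    · intro hz
      have := hn1 _ hz
      simpa [mul_assoc] using this
  have htop' : C.N len = (C.conjC x).N len := by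
    ext z
    show z ∈ C.N len ↔ z ∈ ((C.N len).comap (MulAut.conj x).toMonoidHom)
    rw [Subgroup.mem_comap, htopC]
    simp
  have h1 : cv C (conjBy x u) len = cv (C.conjC x) (conjBy x u) len :=
    cv_indep (Nat.card (C.N len)) (len+len) C (C.conjC x) len len (conjBy x u) hux
      hbase htop' le_rfl le_rfl
  rw [h1, cv_conjC]
  exact (cv_ctr hu len).2 x (by rw [htopC]; trivial)

end CB

namespace CB

variable {G : Type*} [Group G]

noncomputable def ofSeries {g : G} (S : SubnormalSeries G g) (TS : TransversalSystem S) :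
    Chain G where
  N := S.N
  T := TS.T
  mono := S.le_succ
  conj := S.conj_mem
  trans := fun i => ⟨TS.nodup i, TS.mem i, TS.rep i⟩

lemma cSeq_eq_cv {g : G} (S : SubnormalSeries G g) (TS : TransversalSystem S)
    (u : MonoidAlgebra ℤ G) (i : ℕ) : cSeq S TS u i = cv (ofSeries S TS) u i := by
  induction i with
  | zero => rfl
  | succ i ih =>
    show ((TS.T i).map fun h => conjBy h (cSeq S TS u i)).prod
      = ((TS.T i).map fun h => conjBy h (cv (ofSeries S TS) u i)).prod
    rw [ih]

end CB

theorem cSeq_bassElem_pow_and_torsion {G : Type*} [Group G] [Fintype G]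
    (g x : G) (l t k : ℕ) (hl : 0 < l) (ht : 0 < t) (hk : 0 < k)
    (hconj : x⁻¹ * g * x = g ^ l)
    (hlgcd : Nat.gcd l (orderOf g) = 1)
    (hkgcd : Nat.gcd k (orderOf g) = 1)
    (hlt : l ^ t ≡ 1 [MOD orderOf g])
    (S : SubnormalSeries G g) (TS : TransversalSystem S) :
    (∀ i : ℕ, 0 < i →
        cSeq S TS (bassElem (g ^ k) l t) S.len ^ i =
          cSeq S TS (bassElem (g ^ k) (l ^ i) t) S.len) ∧
      cSeq S TS (bassElem (g ^ k) l t) S.len ^ t = 1 := by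
  classical
  set n := orderOf g with hn
  set B := Subgroup.zpowers g with hB
  set C := CB.ofSeries S TS with hC
  set h := g ^ k with hh
  obtain ⟨k', hk'⟩ := CB.exists_inv_mod hkgcd
  have hordh : orderOf h = n := CB.orderOf_pow_eq_of_inv g k k' hk'
  have htpred : l * l^(t-1) = l^t := by
    rw [← pow_succ']
    congr 1
    omega
  have hlinv : l * l^(t-1) ≡ 1 [MOD n] := by rw [htpred]; exact hlt
  have hn1 : ∀ y ∈ B, x⁻¹ * y * x ∈ B := by
    intro y hy
    obtain ⟨m, rfl⟩ := Subgroup.mem_zpowers_iff.mp hy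
    rw [CB.conj_zpow', hconj]
    exact Subgroup.zpow_mem _ (Subgroup.pow_mem _ (Subgroup.mem_zpowers g) l) m
  have hxgx : x * g * x⁻¹ = g ^ (l^(t-1)) := by
    have e1 : x⁻¹ * g^(l^(t-1)) * x = g := by
      rw [CB.conj_pow', hconj, ← pow_mul]
      have : l * l^(t-1) ≡ 1 [MOD orderOf g] := hlinv
      calc g ^ (l * l^(t-1)) = g ^ (1:ℕ) := pow_eq_pow_iff_modEq.mpr this
        _ = g := pow_one g
    calc x * g * x⁻¹ = x * (x⁻¹ * g^(l^(t-1)) * x) * x⁻¹ := by rw [e1]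
      _ = g^(l^(t-1)) := by group
  have hn2 : ∀ y ∈ B, x * y * x⁻¹ ∈ B := by
    intro y hy
    obtain ⟨m, rfl⟩ := Subgroup.mem_zpowers_iff.mp hy
    rw [show x * g^m * x⁻¹ = (x * g * x⁻¹)^m from by simpa using CB.conj_zpow' x⁻¹ g m, hxgx]
    exact Subgroup.zpow_mem _ (Subgroup.pow_mem _ (Subgroup.mem_zpowers g) _) m
  have hbase : C.N 0 = B := S.bot_eq
  have htopC : C.N S.len = ⊤ := S.top_eq
  have hn1' : ∀ y ∈ C.N 0, x⁻¹ * y * x ∈ C.N 0 := by rw [hbase]; exact hn1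
  have hn2' : ∀ y ∈ C.N 0, x * y * x⁻¹ ∈ C.N 0 := by rw [hbase]; exact hn2
  have hctr : ∀ c m : ℕ, CB.IsCtr (C.N 0) (bassElem (g^c) m t) := by
    intro c m
    rw [hbase]
    exact CB.isCtr_of_mem_zpowers (CB.bass_mem_sg g c m t)
  have hhx : x⁻¹ * h * x = h ^ l := by
    rw [hh, CB.conj_pow', hconj, ← pow_mul, ← pow_mul, mul_comm]
  have key : ∀ i : ℕ, CB.cv C (bassElem h l t) S.len ^ i = CB.cv C (bassElem h (l^i) t) S.len := by
    intro i
    induction i with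
    | zero =>
      simp only [pow_zero]
      rw [CB.bass_one h 1 t one_pos (Nat.ModEq.refl 1), CB.cv_one]
    | succ i ih =>
      have hlipos : 0 < l^i := pow_pos hl i
      have hlit : (l^i)^t ≡ 1 [MOD n] := by
        have e : (l^i)^t = (l^t)^i := by
          rw [← pow_mul, ← pow_mul, mul_comm]
        rw [e]
        calc (l^t)^i ≡ 1^i [MOD n] := hlt.pow i
          _ = 1 := one_pow i
      have hbm : bassElem h l t * bassElem (h^l) (l^i) t = bassElem h (l^(i+1)) t := by
        rw [CB.bass_mul h l (l^i) t hl ⟨l^(t-1), by rw [hordh]; exact hlinv⟩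
          (by rw [hordh]; exact CB.dvd_one_sub_pow_of_modEq hl hlt)
          (by rw [hordh]; exact CB.dvd_one_sub_pow_of_modEq hlipos hlit)]
        congr 1
        rw [← pow_succ']
      have hconjbass : bassElem (h^l) (l^i) t = conjBy x (bassElem h (l^i) t) := by
        rw [CB.conjBy_bassElem, hhx]
      have hctrconj : CB.IsCtr (C.N 0) (conjBy x (bassElem h (l^i) t)) :=
        (hctr k (l^i)).conj hn1' hn2'
      have hmul : CB.cv C (bassElem h l t * conjBy x (bassElem h (l^i) t)) S.len
          = CB.cv C (bassElem h l t) S.len * CB.cv C (conjBy x (bassElem h (l^i) t)) S.len :=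
        CB.cv_mul (hctr k l) hctrconj S.len
      have hinv : CB.cv C (conjBy x (bassElem h (l^i) t)) S.len
          = CB.cv C (bassElem h (l^i) t) S.len :=
        CB.cv_conj_inv C S.len htopC hn1' hn2' (hctr k (l^i))
      rw [pow_succ', ih, ← hbm, hconjbass, hmul, hinv]
  constructor
  · intro i _
    rw [CB.cSeq_eq_cv, CB.cSeq_eq_cv, ← hC]
    exact key i
  · rw [CB.cSeq_eq_cv, ← hC, key t,
      CB.bass_one h (l^t) t (pow_pos hl t) (by rw [hordh]; exact hlt), CB.cv_one]
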